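/- For every n ≥ 2 and k ≥ 2, the number p_{n,k} of pop-stacked permutations of size n with exactly k runs is even; consequently the total number p_n of pop-stacked permutations of size n is odd. -/

import Mathlib

/-- Split a list into maximal strictly decreasing contiguous blocks ("falls"). -/
def fallSplit : List ℕ → List (List ℕ)
  | [] => []
  | a :: rest =>
    match fallSplit rest with
    | (b :: bs) :: gs => if b < a then (a :: b :: bs) :: gs else [a] :: (b :: bs) :: gs
    | gs => [a] :: gs

/-- Split a list into maximal strictly increasing contiguous blocks ("runs"). -/
def runSplit : List ℕ → List (List ℕ)
  | [] => []
  | a :: rest =>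
    match runSplit rest with
    | (b :: bs) :: gs => if a < b then (a :: b :: bs) :: gs else [a] :: (b :: bs) :: gs
    | gs => [a] :: gs

/-- The flip transformation `T`: reverse every fall. -/
def flipT (l : List ℕ) : List ℕ := ((fallSplit l).map List.reverse).flatten

/-- `l` is the one-line notation of a permutation of `{1, …, n}`. -/
def IsPermList (n : ℕ) (l : List ℕ) : Prop := l.Perm (List.range' 1 n)

/-- Every pair of adjacent runs overlaps: `min R₁ < max R₂` (pop-stacked condition). -/
def Overlapping (l : List ℕ) : Prop :=
  ∀ R₁ R₂ : List ℕ, [R₁, R₂] <:+: runSplit l → ∃ a ∈ R₁, ∃ b ∈ R₂, a < b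

/-! ### Auxiliary development -/

/-- Boundary relation between adjacent runs: no ascent across the split point. -/
def Brel (r s : List ℕ) : Prop := ∀ a ∈ r.getLast?, ∀ b ∈ s.head?, ¬ a < b

/-- The run-reversal map: list the runs from last to first. -/
def Rmap (l : List ℕ) : List ℕ := ((runSplit l).reverse).flatten

theorem runSplit_spec (l : List ℕ) :
    (runSplit l).flatten = l ∧ (∀ r ∈ runSplit l, r ≠ []) ∧
    (∀ r ∈ runSplit l, r.Chain' (· < ·)) ∧
    (runSplit l).Chain' Brel := by
  induction l with
  | nil => simp [runSplit, List.Chain']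
  | cons a rest ih =>
    obtain ⟨hflat, hne, hch, hB⟩ := ih
    rcases h : runSplit rest with _ | ⟨r, gs⟩
    · rw [h] at hflat; simp at hflat
      subst hflat
      simp [runSplit, Brel, List.Chain']
    · rcases r with _ | ⟨b, bs⟩
      · exact absurd rfl (hne [] (h ▸ List.mem_cons_self))
      · rw [h] at hflat hne hch hB
        by_cases hab : a < b
        · have e : runSplit (a :: rest) = (a :: b :: bs) :: gs := by
            simp only [runSplit, h, if_pos hab]
          rw [e]
          refine ⟨by simpa using hflat, ?_, ?_, ?_⟩
          · intro r hr'
            rcases List.mem_cons.mp hr' with rfl | hr; · simp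
            · exact hne r (List.mem_cons_of_mem _ hr)
          · intro r hr'
            rcases List.mem_cons.mp hr' with rfl | hr
            · exact (List.isChain_cons_cons.mpr ⟨hab, hch _ (List.mem_cons_self)⟩)
            · exact hch r (List.mem_cons_of_mem _ hr)
          · unfold List.Chain' at hB ⊢
            rw [List.isChain_cons] at hB ⊢
            refine ⟨?_, hB.2⟩
            intro y hy
            have := hB.1 y hy
            intro c hc
            rw [List.getLast?_cons_cons] at hc
            exact this c hc
        · have e : runSplit (a :: rest) = [a] :: (b :: bs) :: gs := by
            simp only [runSplit, h, if_neg hab]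
          rw [e]
          refine ⟨by simpa using hflat, ?_, ?_, ?_⟩
          · intro r hr'
            rcases List.mem_cons.mp hr' with rfl | hr; · simp
            · exact hne r hr
          · intro r hr'
            rcases List.mem_cons.mp hr' with rfl | hr; · simp [List.Chain']
            · exact hch r hr
          · refine List.isChain_cons_cons.mpr ⟨?_, hB⟩
            intro x hx y hy
            simp at hx hy
            subst hx hy
            exact hab

theorem runSplit_head (b : ℕ) (t : List ℕ) : ∃ bs gs, runSplit (b :: t) = (b :: bs) :: gs := by
  obtain ⟨hflat, hne, -, -⟩ := runSplit_spec (b :: t)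
  rcases h : runSplit (b :: t) with _ | ⟨r, gs⟩
  · rw [h] at hflat; simp at hflat
  · rcases r with _ | ⟨c, cs⟩
    · exact absurd rfl (hne [] (h ▸ List.mem_cons_self))
    · rw [h] at hflat
      simp at hflat
      exact ⟨cs, gs, by rw [hflat.1]⟩

theorem runSplit_append (r t : List ℕ) (hr : r ≠ []) (hc : r.Chain' (· < ·))
    (hb : Brel r t) : runSplit (r ++ t) = r :: runSplit t := by
  induction r with
  | nil => exact absurd rfl hr
  | cons a r' ih =>
    rcases r' with _ | ⟨c, r''⟩
    · rcases t with _ | ⟨b, t'⟩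
      · simp [runSplit]
      · obtain ⟨bs, gs, h⟩ := runSplit_head b t'
        have hab : ¬ a < b := hb a (by simp) b (by simp)
        show runSplit (a :: b :: t') = [a] :: runSplit (b :: t')
        conv_lhs => rw [runSplit, h]
        simp only [if_neg hab]
        rw [h]
    · have hac : a < c := (List.isChain_cons_cons.mp hc).1
      have ih' : runSplit ((c :: r'') ++ t) = (c :: r'') :: runSplit t := by
        apply ih (by simp) (List.isChain_cons_cons.mp hc).2
        intro x hx y hy
        apply hb x _ y hy
        rwa [List.getLast?_cons_cons]
      show runSplit (a :: ((c :: r'') ++ t)) = (a :: c :: r'') :: runSplit t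
      conv_lhs => rw [runSplit, ih']
      simp only [if_pos hac]

theorem runSplit_flatten (L : List (List ℕ)) (hne : ∀ r ∈ L, r ≠ [])
    (hch : ∀ r ∈ L, r.Chain' (· < ·)) (hB : L.Chain' Brel) :
    runSplit L.flatten = L := by
  induction L with
  | nil => rfl
  | cons r L' ih =>
    have ih' : runSplit L'.flatten = L' :=
      ih (fun s hs => hne s (List.mem_cons_of_mem _ hs))
        (fun s hs => hch s (List.mem_cons_of_mem _ hs)) (hB.tail)
    rw [List.flatten_cons, runSplit_append r _ (hne r (List.mem_cons_self))
      (hch r (List.mem_cons_self)), ih']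
    intro a ha b hbm
    rcases L' with _ | ⟨s, L''⟩
    · simp at hbm
    · have hs : s ≠ [] := hne s (by simp)
      have hhead : (s :: L'').flatten.head? = s.head? := by
        rcases s with _ | ⟨x, s'⟩
        · exact absurd rfl hs
        · simp
      rw [hhead] at hbm
      exact (List.isChain_cons_cons.mp hB).1 a ha b hbm

theorem chain'_of_infix_pairs {α : Type*} {P : α → α → Prop} {L : List α}
    (h : ∀ a b, [a, b] <:+: L → P a b) : L.Chain' P := by
  induction L with
  | nil => exact List.isChain_nil
  | cons x L ih =>
    rcases L with _ | ⟨y, L'⟩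
    · exact List.isChain_singleton x
    · refine List.isChain_cons_cons.mpr ⟨h x y ⟨[], L', by simp⟩, ?_⟩
      exact ih fun a b hab => h a b (hab.trans (List.suffix_cons x _).isInfix)

theorem pair_of_chain' {α : Type*} {P : α → α → Prop} {L : List α} (h : L.Chain' P)
    {a b : α} (hab : [a, b] <:+: L) : P a b := by
  have := h.infix hab
  exact (List.isChain_pair.mp this)

theorem head_le_of_chain {r : List ℕ} (h : r.Chain' (· < ·)) {x : ℕ} (hx : x ∈ r) :
    ∀ a ∈ r.head?, a ≤ x := by
  rcases r with _ | ⟨a, r'⟩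
  · simp at hx
  · intro c hcm
    simp at hcm; subst hcm
    rcases List.mem_cons.mp hx with rfl | hx
    · exact le_refl _
    · exact le_of_lt (List.rel_of_pairwise_cons (List.isChain_iff_pairwise.mp h) hx)

theorem le_getLast_of_chain {r : List ℕ} (h : r.Chain' (· < ·)) {x : ℕ} (hx : x ∈ r) :
    ∀ a ∈ r.getLast?, x ≤ a := by
  intro c hcm
  have hpw := List.isChain_iff_pairwise.mp h
  have hpw' : r.reverse.Pairwise (· > ·) := by rw [List.pairwise_reverse]; exact hpw
  rw [← List.head?_reverse] at hcm
  have hx' : x ∈ r.reverse := List.mem_reverse.mpr hx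
  rcases hr : r.reverse with _ | ⟨d, t⟩
  · rw [hr] at hcm; simp at hcm
  · rw [hr] at hcm hx' hpw'
    simp at hcm; subst hcm
    rcases List.mem_cons.mp hx' with rfl | hx''
    · exact le_refl _
    · exact le_of_lt (List.rel_of_pairwise_cons hpw' hx'')

theorem flatten_reverse_perm (L : List (List ℕ)) : L.reverse.flatten.Perm L.flatten := by
  induction L with
  | nil => exact List.Perm.refl _
  | cons a L ih =>
    simp only [List.reverse_cons, List.flatten_append, List.flatten_cons,
      List.flatten_nil, List.append_nil]
    exact (ih.append_right a).trans List.perm_append_comm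

theorem runSplit_Rmap {l : List ℕ} (ho : Overlapping l) :
    runSplit (Rmap l) = (runSplit l).reverse := by
  obtain ⟨hflat, hne, hch, hB⟩ := runSplit_spec l
  apply runSplit_flatten
  · intro r hr; exact hne r (List.mem_reverse.mp hr)
  · intro r hr; exact hch r (List.mem_reverse.mp hr)
  · unfold List.Chain'
    rw [List.isChain_reverse]
    apply chain'_of_infix_pairs
    intro s r hinf
    obtain ⟨x, hx, y, hy, hxy⟩ := ho s r hinf
    intro a ha b hb
    have h1 : b ≤ x := head_le_of_chain (hch s (hinf.subset (by simp))) hx b hb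
    have h2 : y ≤ a := le_getLast_of_chain (hch r (hinf.subset (by simp))) hy a ha
    omega

theorem Rmap_perm (l : List ℕ) : (Rmap l).Perm l :=
  (flatten_reverse_perm _).trans (by rw [(runSplit_spec l).1])

theorem Rmap_Rmap {l : List ℕ} (ho : Overlapping l) : Rmap (Rmap l) = l := by
  show ((runSplit (Rmap l)).reverse).flatten = l
  rw [runSplit_Rmap ho, List.reverse_reverse, (runSplit_spec l).1]

theorem pairwise_disjoint_runSplit {l : List ℕ} (hnd : l.Nodup) :
    (runSplit l).Pairwise List.Disjoint := by
  have h : (runSplit l).flatten.Nodup := by rw [(runSplit_spec l).1]; exact hnd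
  exact (List.nodup_flatten.mp h).2

theorem Overlapping_Rmap {l : List ℕ} (hnd : l.Nodup) (ho : Overlapping l) :
    Overlapping (Rmap l) := by
  intro R₁ R₂ hinf
  rw [runSplit_Rmap ho] at hinf
  have hinf' : [R₂, R₁] <:+: runSplit l := by
    rw [← List.reverse_reverse (runSplit l)]
    rw [show ([R₂, R₁] : List (List ℕ)) = ([R₁, R₂] : List (List ℕ)).reverse from rfl]
    exact List.reverse_infix.mpr hinf
  obtain ⟨hflat, hne, hch, hB⟩ := runSplit_spec l
  have hmem₂ : R₂ ∈ runSplit l := hinf'.subset (by simp)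
  have hmem₁ : R₁ ∈ runSplit l := hinf'.subset (by simp)
  have hne₁ : R₁ ≠ [] := hne _ hmem₁
  have hne₂ : R₂ ≠ [] := hne _ hmem₂
  have hBrel : Brel R₂ R₁ := pair_of_chain' hB hinf'
  have hdisj : List.Disjoint R₂ R₁ :=
    List.rel_of_pairwise_cons ((pairwise_disjoint_runSplit hnd).sublist hinf'.sublist)
      (List.mem_cons_self)
  have hle : ¬ R₂.getLast hne₂ < R₁.head hne₁ :=
    hBrel _ (List.getLast_mem_getLast? hne₂) _ (by simp [List.head?_eq_head hne₁, Option.mem_def])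
  have hmemb : R₂.getLast hne₂ ∈ R₂ := List.getLast_mem hne₂
  have hmema : R₁.head hne₁ ∈ R₁ := List.head_mem hne₁
  have hne' : R₁.head hne₁ ≠ R₂.getLast hne₂ := by
    intro h
    rw [← h] at hmemb
    exact hdisj hmemb hmema
  exact ⟨R₁.head hne₁, hmema, R₂.getLast hne₂, hmemb, by omega⟩

theorem Rmap_ne {l : List ℕ} (hnd : l.Nodup) (ho : Overlapping l)
    (hk : 2 ≤ (runSplit l).length) : Rmap l ≠ l := by
  intro he
  have h1 : runSplit l = (runSplit l).reverse := by
    rw [← runSplit_Rmap ho, he]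
  obtain ⟨hflat, hne, hch, hB⟩ := runSplit_spec l
  have hpd := pairwise_disjoint_runSplit hnd
  rcases hL : runSplit l with _ | ⟨R₁, L'⟩
  · rw [hL] at hk; simp at hk
  · rw [hL] at h1 hk hne hpd
    rcases hL' : L'.reverse with _ | ⟨R₂, rest⟩
    · have : L' = [] := by simpa using congrArg List.reverse hL'
      subst this; simp at hk
    · rw [List.reverse_cons, hL'] at h1
      have h2 : R₁ = R₂ ∧ L' = rest ++ [R₁] := by
        have := h1
        simp at this
        exact ⟨this.1, this.2⟩
      have hmem : R₁ ∈ L' := by rw [h2.2]; simp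
      have hdisj : List.Disjoint R₁ R₁ :=
        List.rel_of_pairwise_cons hpd hmem
      have hne₁ : R₁ ≠ [] := hne R₁ (List.mem_cons_self)
      exact hdisj (List.head_mem hne₁) (List.head_mem hne₁)

theorem runSplit_sorted {n : ℕ} (hn : 1 ≤ n) :
    runSplit (List.range' 1 n) = [List.range' 1 n] := by
  have key := runSplit_flatten [List.range' 1 n] ?_ ?_ ?_
  · simpa using key
  · intro r hr; simp at hr; subst hr
    simp [List.range'_eq_nil_iff]; omega
  · intro r hr; simp at hr; subst hr
    exact List.isChain_iff_pairwise.mpr (List.pairwise_lt_range' (s := 1) (n := n))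
  · exact List.isChain_singleton _

theorem overlapping_range' (n : ℕ) (hn : 1 ≤ n) : Overlapping (List.range' 1 n) := by
  intro R₁ R₂ hinf
  rw [runSplit_sorted hn] at hinf
  have := hinf.length_le
  simp at this

theorem eq_range'_of_one_run {n : ℕ} (hn : 1 ≤ n) {l : List ℕ} (hp : IsPermList n l)
    (hlen : (runSplit l).length ≤ 1) : l = List.range' 1 n := by
  obtain ⟨hflat, hne, hch, hB⟩ := runSplit_spec l
  have hl : l ≠ [] := by
    intro h
    have := hp.length_eq
    rw [h, List.length_range'] at this
    simp at this; omega
  rcases hL : runSplit l with _ | ⟨r, L'⟩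
  · rw [hL] at hflat; simp at hflat; exact absurd hflat hl
  · rw [hL] at hlen hflat hch
    simp at hlen
    subst hlen
    simp at hflat
    have hsort : l.Pairwise (· < ·) := by
      rw [← hflat]
      exact List.isChain_iff_pairwise.mp (hch r (List.mem_cons_self))
    have hsort' : (List.range' 1 n).Pairwise (· < ·) := List.pairwise_lt_range' (s := 1) (n := n)
    exact List.Perm.eq_of_pairwise (fun a b _ _ h1 h2 => absurd (h1.trans h2) (lt_irrefl a)) hsort hsort' hp

/-! ### Parity via involutions -/

open Function in
theorem involution_parity {α : Type} [Finite α] (f : α → α) (hf : ∀ x, f (f x) = x) :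
    Nat.card α ≡ Nat.card {x : α // f x = x} [MOD 2] := by
  classical
  cases nonempty_fintype α
  let F : Function.End α := f
  have h2 : F ^ 2 ^ 1 = 1 := by
    show F ^ 2 = 1
    rw [sq]
    funext x
    exact hf x
  have := Equiv.Perm.card_fixedPoints_modEq (f := F) (p := 2) (n := 1) h2
  have hcard1 : Nat.card α = Fintype.card α := Nat.card_eq_fintype_card
  have hcard2 : Nat.card {x : α // f x = x} = Fintype.card (Function.fixedPoints f) := by
    rw [Nat.card_eq_fintype_card]
    apply Fintype.card_congr
    exact Equiv.subtypeEquivRight (fun x => Iff.rfl)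
  rw [hcard1, hcard2]
  exact this

theorem even_of_involution {α : Type} [Finite α] (f : α → α) (hf : ∀ x, f (f x) = x)
    (hnf : ∀ x, f x ≠ x) : Even (Nat.card α) := by
  have h := involution_parity f hf
  have : Nat.card {x : α // f x = x} = 0 := by
    have : IsEmpty {x : α // f x = x} := ⟨fun ⟨x, hx⟩ => hnf x hx⟩
    exact Nat.card_of_isEmpty
  rw [this] at h
  rw [Nat.even_iff]
  simpa [Nat.ModEq] using h

theorem odd_of_involution {α : Type} [Finite α] (f : α → α) (hf : ∀ x, f (f x) = x)
    (e : α) (he : f e = e) (huniq : ∀ x, f x = x → x = e) : Odd (Nat.card α) := by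
  have h := involution_parity f hf
  have : Nat.card {x : α // f x = x} = 1 := by
    rw [Nat.card_eq_one_iff_unique]
    exact ⟨⟨fun ⟨x, hx⟩ ⟨y, hy⟩ => by simp [huniq x hx, huniq y hy]⟩, ⟨⟨e, he⟩⟩⟩
  rw [this] at h
  rw [Nat.odd_iff]
  simpa [Nat.ModEq] using h

theorem finite_sub (n : ℕ) (P : List ℕ → Prop) :
    Finite {l : List ℕ // IsPermList n l ∧ P l} := by
  classical
  have hfin : Finite {l : List ℕ // l ∈ (List.range' 1 n).permutations} :=
    (List.range' 1 n).permutations.finite_toSet.to_subtype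
  apply Finite.of_injective (fun x : {l : List ℕ // IsPermList n l ∧ P l} =>
    (⟨x.1, (List.mem_permutations).2 x.2.1⟩ : {l // l ∈ (List.range' 1 n).permutations}))
  intro a b hab
  simp only [Subtype.mk.injEq] at hab
  exact Subtype.ext hab

theorem nodup_of_isPermList {n : ℕ} {l : List ℕ} (hp : IsPermList n l) : l.Nodup :=
  hp.nodup_iff.mpr (List.nodup_range' (s := 1) (n := n))

/-- For n, k ≥ 2 the number of pop-stacked permutations of size n with exactly k runs is
even; consequently the total number of pop-stacked permutations of size n is odd. -/
theorem popStacked_parity :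
    (∀ n k : ℕ, 2 ≤ n → 2 ≤ k →
      Even (Nat.card {l : List ℕ //
        IsPermList n l ∧ Overlapping l ∧ (runSplit l).length = k})) ∧
    (∀ n : ℕ, 1 ≤ n →
      Odd (Nat.card {l : List ℕ // IsPermList n l ∧ Overlapping l})) := by
  constructor
  · intro n k hn hk
    haveI := finite_sub n (fun l => Overlapping l ∧ (runSplit l).length = k)
    set α := {l : List ℕ // IsPermList n l ∧ Overlapping l ∧ (runSplit l).length = k} with hα
    have hmap : ∀ x : α, IsPermList n (Rmap x.1) ∧ Overlapping (Rmap x.1) ∧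
        (runSplit (Rmap x.1)).length = k := by
      rintro ⟨l, hp, ho, hlen⟩
      refine ⟨(Rmap_perm l).trans hp, Overlapping_Rmap (nodup_of_isPermList hp) ho, ?_⟩
      rw [runSplit_Rmap ho, List.length_reverse]
      exact hlen
    set f : α → α := fun x => ⟨Rmap x.1, hmap x⟩ with hfdef
    apply even_of_involution f
    · rintro ⟨l, hp, ho, hlen⟩
      exact Subtype.ext (Rmap_Rmap ho)
    · rintro ⟨l, hp, ho, hlen⟩ h
      have hRl : Rmap l = l := congrArg Subtype.val h
      exact Rmap_ne (nodup_of_isPermList hp) ho (by omega) hRl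
  · intro n hn
    haveI := finite_sub n (fun l => Overlapping l)
    set α := {l : List ℕ // IsPermList n l ∧ Overlapping l} with hα
    have hmap : ∀ x : α, ¬ (runSplit x.1).length ≤ 1 →
        IsPermList n (Rmap x.1) ∧ Overlapping (Rmap x.1) := by
      rintro ⟨l, hp, ho⟩ _
      exact ⟨(Rmap_perm l).trans hp, Overlapping_Rmap (nodup_of_isPermList hp) ho⟩
    set g : α → α := fun x =>
      if h : (runSplit x.1).length ≤ 1 then x else ⟨Rmap x.1, hmap x h⟩ with hgdef
    have hid : IsPermList n (List.range' 1 n) := List.Perm.refl _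
    set e : α := ⟨List.range' 1 n, hid, overlapping_range' n hn⟩ with he
    have hge : g e = e := by
      rw [hgdef]
      simp only
      rw [dif_pos]
      show (runSplit (List.range' 1 n)).length ≤ 1
      rw [runSplit_sorted hn]
      simp
    apply odd_of_involution g ?_ e hge
    · intro x hx
      by_cases h : (runSplit x.1).length ≤ 1
      · exact Subtype.ext (eq_range'_of_one_run hn x.2.1 h)
      · exfalso
        have hgx : g x = ⟨Rmap x.1, hmap x h⟩ := dif_neg h
        rw [hgx] at hx
        have hRl : Rmap x.1 = x.1 := congrArg Subtype.val hx
        exact Rmap_ne (nodup_of_isPermList x.2.1) x.2.2 (by omega) hRl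
    · intro x
      by_cases h : (runSplit x.1).length ≤ 1
      · have h1 : g x = x := dif_pos h
        rw [h1, h1]
      · have hgx : g x = ⟨Rmap x.1, hmap x h⟩ := dif_neg h
        rw [hgx]
        have hlen : ¬ (runSplit (Rmap x.1)).length ≤ 1 := by
          rw [runSplit_Rmap x.2.2, List.length_reverse]
          exact h
        have : g ⟨Rmap x.1, hmap x h⟩ = ⟨Rmap (Rmap x.1), _⟩ := dif_neg hlen
        rw [this]
        exact Subtype.ext (Rmap_Rmap x.2.2)
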